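/- Let (V,q) be a nondegenerate quadratic space over a field F of characteristic 2 and τ an involution in O(V,q) with R(τ) = K(τ). Suppose (u₁,…,u_s) is an orthogonal basis of R(τ) with respect to the Wall form ω_τ. Then in the Clifford algebra C(q), the elements u₁,…,u_s pairwise commute, satisfy u_i² = q(u_i) ∈ F, and generate a commutative subalgebra of dimension 2^s over F, where s = (dim V)/2. -/

import Mathlib

theorem wall_aux_adjoin_comm {F A : Type*} [CommSemiring F] [Semiring A] [Algebra F A]
    {s : Set A} (hs : ∀ x ∈ s, ∀ y ∈ s, x * y = y * x) :
    ∀ a ∈ Algebra.adjoin F s, ∀ b ∈ Algebra.adjoin F s, a * b = b * a := by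
  have key : ∀ y ∈ s, ∀ a ∈ Algebra.adjoin F s, y * a = a * y := by
    intro y hy a ha
    induction ha using Algebra.adjoin_induction with
    | mem x hx => exact hs y hy x hx
    | algebraMap r => exact (Algebra.commutes r y).symm
    | add x z _ _ hx hz => rw [mul_add, add_mul, hx, hz]
    | mul x z _ _ hx hz => rw [← mul_assoc, hx, mul_assoc, hz, mul_assoc]
  intro a ha b hb
  induction ha using Algebra.adjoin_induction with
  | mem x hx => exact key x hx b hb
  | algebraMap r => exact Algebra.commutes r b
  | add x z _ _ hx hz => rw [add_mul, mul_add, hx, hz]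
  | mul x z _ _ hx hz => rw [mul_assoc, hz, ← mul_assoc, hx, mul_assoc]


set_option maxHeartbeats 1000000 in
set_option synthInstance.maxHeartbeats 400000 in
open CliffordAlgebra Finset in
theorem wall_aux_dim {F V : Type*} [Field F] [CharP F 2] [AddCommGroup V] [Module F V]
    {s : ℕ} (q : QuadraticForm F V) (u : Fin s → V) (hind : LinearIndependent F u)
    (hpol : ∀ i j, i ≠ j → QuadraticMap.polar q (u i) (u j) = 0) :
    Module.finrank F
      (Algebra.adjoin F (Set.range fun i => CliffordAlgebra.ι q (u i))) = 2 ^ s := by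
  classical
  have hneg1 : (-1 : F) = 1 := CharTwo.neg_eq 1
  have hnegC : ∀ x : CliffordAlgebra q, -x = x := fun x => by
    rw [← neg_one_smul F x, hneg1, one_smul]
  have hnegE : ∀ x : CliffordAlgebra (0 : QuadraticForm F V), -x = x := fun x => by
    rw [← neg_one_smul F x, hneg1, one_smul]
  have hcomm : ∀ i j, ι q (u i) * ι q (u j) = ι q (u j) * ι q (u i) := by
    intro i j
    rcases eq_or_ne i j with rfl | hij
    · rfl
    · have h := CliffordAlgebra.ι_mul_ι_add_swap (Q := q) (u i) (u j)
      rw [hpol i j hij, map_zero, add_eq_zero_iff_eq_neg] at h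
      rw [h, hnegC]
  have hcomm0 : ∀ v w : V, ι (0 : QuadraticForm F V) v * ι 0 w = ι 0 w * ι 0 v := by
    intro v w
    have h := CliffordAlgebra.ι_mul_ι_add_swap (Q := (0 : QuadraticForm F V)) v w
    rw [show QuadraticMap.polar (0 : QuadraticForm F V) v w = 0 by
      simp [QuadraticMap.polar], map_zero, add_eq_zero_iff_eq_neg] at h
    rw [h, hnegE]
  -- dual functionals
  have hext := (linearIndepOn_id_range_iff hind.injective).mpr hind
  set bV : Module.Basis _ F V := Module.Basis.extend hext with hbV
  have humem : ∀ i, u i ∈ hext.extend (Set.subset_univ _) :=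
    fun i => hext.subset_extend _ ⟨i, rfl⟩
  set d : Fin s → Module.Dual F V := fun i => bV.coord ⟨u i, humem i⟩ with hd_def
  have hd : ∀ i j, d i (u j) = if i = j then 1 else 0 := by
    intro i j
    have huj : u j = bV ⟨u j, humem j⟩ := by rw [hbV, Module.Basis.extend_apply_self]
    rw [hd_def]
    show bV.coord ⟨u i, humem i⟩ (u j) = _
    rw [huj, Module.Basis.coord_apply, Module.Basis.repr_self, Finsupp.single_apply]
    rcases eq_or_ne i j with rfl | h
    · simp
    · rw [if_neg h]
      split
      · next hh => exact absurd (hind.injective (congrArg Subtype.val hh)).symm h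
      · rfl
  -- bilinear form representing q, vanishing on off-diagonal pairs (u i, u j)
  obtain ⟨B0, hB0⟩ := LinearMap.BilinMap.toQuadraticMap_surjective (R := F) (M := V) (N := F) q
  have hpolB0 : ∀ x y : V, QuadraticMap.polar q x y = B0 x y + B0 y x := by
    intro x y
    rw [← hB0]
    exact LinearMap.BilinMap.polar_toQuadraticMap (B := B0) x y
  set E : V →ₗ[F] V →ₗ[F] F :=
    ∑ i : Fin s, ∑ j : Fin s,
      if i = j then 0 else (B0 (u i) (u j)) • ((d i).smulRight (d j)) with hE_def
  have hE_apply : ∀ v w : V, E v w =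
      ∑ i : Fin s, ∑ j : Fin s, (if i = j then 0 else B0 (u i) (u j) * (d i v * d j w)) := by
    intro v w
    rw [hE_def]
    simp only [LinearMap.sum_apply, LinearMap.smul_apply, LinearMap.smulRight_apply,
      smul_eq_mul]
    refine Finset.sum_congr rfl fun i _ => Finset.sum_congr rfl fun j _ => ?_
    split <;> simp [mul_assoc]
  have hEvv : ∀ v : V, E v v = 0 := by
    intro v
    rw [hE_apply]
    rw [← Finset.sum_product']
    apply Finset.sum_involution (fun p _ => (p.2, p.1))
    · rintro ⟨i, j⟩ -
      rcases eq_or_ne i j with rfl | hij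
      · simp
      · simp only [if_neg hij, if_neg hij.symm]
        have : B0 (u i) (u j) + B0 (u j) (u i) = 0 := by
          rw [← hpolB0]; exact hpol i j hij
        calc B0 (u i) (u j) * (d i v * d j v) + B0 (u j) (u i) * (d j v * d i v)
            = (B0 (u i) (u j) + B0 (u j) (u i)) * (d i v * d j v) := by ring
          _ = 0 := by rw [this, zero_mul]
    · rintro ⟨i, j⟩ - hne
      rcases eq_or_ne i j with rfl | hij
      · simp at hne
      · simp [hij]
    · rintro ⟨i, j⟩ -; exact Finset.mem_product.mpr ⟨Finset.mem_univ _, Finset.mem_univ _⟩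
    · rintro ⟨i, j⟩ -; rfl
  have hEu : ∀ k l, k ≠ l → E (u k) (u l) = B0 (u k) (u l) := by
    intro k l hkl
    rw [hE_apply]
    rw [Finset.sum_eq_single k]
    · rw [Finset.sum_eq_single l]
      · simp [hd, hkl]
      · intro j _ hj
        simp [hd, hj]
      · intro h; exact absurd (Finset.mem_univ l) h
    · intro i _ hi
      apply Finset.sum_eq_zero
      intro j _
      simp [hd, hi]
    · intro h; exact absurd (Finset.mem_univ k) h
  set B : V →ₗ[F] V →ₗ[F] F := B0 + E with hB_def
  have hBu : ∀ k l, k ≠ l → B (u k) (u l) = 0 := by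
    intro k l hkl
    rw [hB_def]
    simp only [LinearMap.add_apply]
    rw [hEu k l hkl, CharTwo.add_self_eq_zero]
  have hB : LinearMap.BilinMap.toQuadraticMap B = (0 : QuadraticForm F V) - q := by
    ext v
    rw [LinearMap.BilinMap.toQuadraticMap_apply]
    simp only [hB_def, LinearMap.add_apply, QuadraticMap.sub_apply, QuadraticMap.zero_apply,
      zero_sub, QuadraticMap.neg_apply]
    rw [hEvv, add_zero, CharTwo.neg_eq, ← LinearMap.BilinMap.toQuadraticMap_apply, hB0]
  -- products
  set m : Finset (Fin s) → CliffordAlgebra q :=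
    fun S => S.noncommProd (fun i => ι q (u i))
      (fun i _ j _ _ => hcomm i j) with hm_def
  set e : Finset (Fin s) → CliffordAlgebra (0 : QuadraticForm F V) :=
    fun S => S.noncommProd (fun i => ι (0 : QuadraticForm F V) (u i))
      (fun i _ j _ _ => hcomm0 (u i) (u j)) with he_def
  have hm_empty : m ∅ = 1 := Finset.noncommProd_empty _ _
  have he_empty : e ∅ = 1 := Finset.noncommProd_empty _ _
  have hm_insert : ∀ (i) (S : Finset (Fin s)), i ∉ S →
      m (insert i S) = ι q (u i) * m S :=
    fun i S hi => Finset.noncommProd_insert_of_notMem _ _ _ _ hi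
  have he_insert : ∀ (i) (S : Finset (Fin s)), i ∉ S →
      e (insert i S) = ι (0 : QuadraticForm F V) (u i) * e S :=
    fun i S hi => Finset.noncommProd_insert_of_notMem _ _ _ _ hi
  -- contraction of products
  have hdm : ∀ (i) (S : Finset (Fin s)),
      contractLeft (d i) (m S) = if i ∈ S then m (S.erase i) else 0 := by
    intro i S
    induction S using Finset.induction_on with
    | empty => rw [hm_empty, if_neg (Finset.notMem_empty i), contractLeft_one]
    | insert j S hj ih =>
      rw [hm_insert j S hj, contractLeft_ι_mul, ih, hd]
      rcases eq_or_ne i j with rfl | hij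
      · rw [if_pos rfl, if_neg hj, mul_zero, sub_zero, one_smul,
          if_pos (Finset.mem_insert_self i S), Finset.erase_insert hj]
      · rw [if_neg hij, zero_smul, zero_sub, hnegC]
        by_cases hiS : i ∈ S
        · rw [if_pos hiS, if_pos (Finset.mem_insert_of_mem hiS),
            Finset.erase_insert_of_ne (fun h => hij h.symm),
            hm_insert j _ (fun h => hj (Finset.mem_of_mem_erase h))]
        · rw [if_neg hiS, mul_zero,
            if_neg (fun h => (Finset.mem_insert.mp h).elim hij hiS)]
  -- contraction kills exterior products of killed vectors
  have hde : ∀ (f : Module.Dual F V) (S : Finset (Fin s)), (∀ i ∈ S, f (u i) = 0) →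
      contractLeft f (e S) = 0 := by
    intro f S
    induction S using Finset.induction_on with
    | empty => intro _; rw [he_empty, contractLeft_one]
    | insert j S hj ih =>
      intro hf
      rw [he_insert j S hj, contractLeft_ι_mul,
        hf j (Finset.mem_insert_self j S),
        ih (fun i hi => hf i (Finset.mem_insert_of_mem hi)), zero_smul, mul_zero, sub_zero]
  -- changeForm sends m S to e S
  set φ : CliffordAlgebra q →ₗ[F] CliffordAlgebra (0 : QuadraticForm F V) :=
    CliffordAlgebra.changeForm hB with hφ_def
  have hφm : ∀ S : Finset (Fin s), φ (m S) = e S := by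
    intro S
    induction S using Finset.induction_on with
    | empty => rw [hm_empty, he_empty, hφ_def, CliffordAlgebra.changeForm_one]
    | insert j S hj ih =>
      rw [hm_insert j S hj, he_insert j S hj, hφ_def, CliffordAlgebra.changeForm_ι_mul]
      rw [← hφ_def, ih, hde (B (u j)) S
        (fun i hi => hBu j i (fun h => hj (h ▸ hi))), sub_zero]
  -- scalar part of exterior products
  set π0 : CliffordAlgebra (0 : QuadraticForm F V) →ₐ[F] F :=
    CliffordAlgebra.lift (0 : QuadraticForm F V)
      ⟨(0 : V →ₗ[F] F), fun m => by simp⟩ with hπ0_def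
  have hπι : ∀ v : V, π0 (ι (0 : QuadraticForm F V) v) = 0 := by
    intro v
    rw [hπ0_def, CliffordAlgebra.lift_ι_apply, LinearMap.zero_apply]
  have hπe : ∀ S : Finset (Fin s),
      π0 (e S) = if S = ∅ then 1 else 0 := by
    intro S
    induction S using Finset.induction_on with
    | empty => rw [he_empty, if_pos rfl, map_one]
    | insert j S hj ih =>
      rw [he_insert j S hj, if_neg (Finset.insert_ne_empty j S), map_mul, hπι, zero_mul]
  -- iterated contraction operators
  have hcommδ : ∀ i j : Fin s,
      Commute (contractLeft (Q := q) (d i)) (contractLeft (Q := q) (d j)) := by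
    intro i j
    refine LinearMap.ext fun x => ?_
    show contractLeft (d i) (contractLeft (d j) x) = contractLeft (d j) (contractLeft (d i) x)
    rw [contractLeft_comm, hnegC]
  set Δ : Finset (Fin s) → Module.End F (CliffordAlgebra q) :=
    fun S => S.noncommProd (fun i => contractLeft (d i))
      (fun i _ j _ _ => hcommδ i j) with hΔ_def
  have hΔ_empty : Δ ∅ = 1 := Finset.noncommProd_empty _ _
  have hΔ_insert : ∀ (i) (S : Finset (Fin s)), i ∉ S →
      Δ (insert i S) = contractLeft (d i) * Δ S :=
    fun i S hi => Finset.noncommProd_insert_of_notMem _ _ _ _ hi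
  have hΔm : ∀ S T : Finset (Fin s), Δ S (m T) = if S ⊆ T then m (T \ S) else 0 := by
    intro S
    induction S using Finset.induction_on with
    | empty =>
      intro T
      rw [hΔ_empty, if_pos (Finset.empty_subset T), Finset.sdiff_empty, Module.End.one_apply]
    | insert k S hk ih =>
      intro T
      rw [hΔ_insert k S hk, Module.End.mul_apply, ih]
      by_cases hST : S ⊆ T
      · rw [if_pos hST, hdm]
        by_cases hkT : k ∈ T
        · rw [if_pos (Finset.mem_sdiff.mpr ⟨hkT, hk⟩),
            if_pos (Finset.insert_subset hkT hST), Finset.sdiff_insert]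
        · rw [if_neg (fun h => hkT (Finset.mem_sdiff.mp h).1),
            if_neg (fun h => hkT (h (Finset.mem_insert_self k S)))]
      · rw [if_neg hST, map_zero, if_neg (fun h => hST (fun x hx =>
          h (Finset.mem_insert_of_mem hx)))]
  have hlam : ∀ S T : Finset (Fin s), π0 (φ (Δ S (m T))) = if S = T then 1 else 0 := by
    intro S T
    rw [hΔm]
    by_cases hST : S ⊆ T
    · rw [if_pos hST, hφm, hπe]
      by_cases h : T \ S = ∅
      · rw [if_pos h, if_pos
          (Finset.Subset.antisymm hST (Finset.sdiff_eq_empty_iff_subset.mp h))]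
      · rw [if_neg h, if_neg (fun hh => h (by rw [hh, Finset.sdiff_self]))]
    · rw [if_neg hST, map_zero, map_zero, if_neg (fun h => hST (by rw [h]))]
  -- linear independence of the products
  have hmli : LinearIndependent F m := by
    rw [Fintype.linearIndependent_iff]
    intro g hg S
    have h1 : π0 (φ (Δ S (∑ T : Finset (Fin s), g T • m T))) = 0 := by rw [hg]; simp
    rw [map_sum, map_sum, map_sum] at h1
    simp_rw [map_smul] at h1
    simp only [hlam S, smul_ite, smul_eq_mul, mul_ite, mul_one, mul_zero] at h1
    rwa [Finset.sum_ite_eq, if_pos (Finset.mem_univ S)] at h1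
  -- the adjoined subalgebra is spanned by the products
  set A := Algebra.adjoin F (Set.range fun i => CliffordAlgebra.ι q (u i)) with hA_def
  have hm_memA : ∀ S, m S ∈ A := by
    intro S
    rw [hm_def]
    exact Submonoid.noncommProd_mem A.toSubsemiring.toSubmonoid S _ _
      (fun i _ => Algebra.subset_adjoin ⟨i, rfl⟩)
  have hιm : ∀ (i) (z), z ∈ Submodule.span F (Set.range m) →
      ι q (u i) * z ∈ Submodule.span F (Set.range m) := by
    intro i z hz
    induction hz using Submodule.span_induction with
    | mem x hx =>
      obtain ⟨T, rfl⟩ := hx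
      by_cases hiT : i ∈ T
      · have : m T = ι q (u i) * m (T.erase i) := by
          conv_lhs => rw [← Finset.insert_erase hiT]
          exact hm_insert i _ (Finset.notMem_erase i T)
        rw [this, ← mul_assoc, CliffordAlgebra.ι_sq_scalar, ← Algebra.smul_def]
        exact Submodule.smul_mem _ _ (Submodule.subset_span ⟨T.erase i, rfl⟩)
      · rw [← hm_insert i T hiT]
        exact Submodule.subset_span ⟨insert i T, rfl⟩
    | zero => rw [mul_zero]; exact Submodule.zero_mem _
    | add x y _ _ hx hy => rw [mul_add]; exact Submodule.add_mem _ hx hy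
    | smul a x _ hx => rw [mul_smul_comm]; exact Submodule.smul_mem _ _ hx
  have hmSy : ∀ (S : Finset (Fin s)), ∀ y ∈ Submodule.span F (Set.range m),
      m S * y ∈ Submodule.span F (Set.range m) := by
    intro S
    induction S using Finset.induction_on with
    | empty => intro y hy; rwa [hm_empty, one_mul]
    | insert j S hj ih =>
      intro y hy
      rw [hm_insert j S hj, mul_assoc]
      exact hιm j _ (ih y hy)
  have hmul_closed : ∀ x ∈ Submodule.span F (Set.range m),
      ∀ y ∈ Submodule.span F (Set.range m), x * y ∈ Submodule.span F (Set.range m) := by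
    intro x hx y hy
    induction hx using Submodule.span_induction with
    | mem a ha => obtain ⟨S, rfl⟩ := ha; exact hmSy S y hy
    | zero => rw [zero_mul]; exact Submodule.zero_mem _
    | add a b _ _ ha hb => rw [add_mul]; exact Submodule.add_mem _ ha hb
    | smul a x _ hx => rw [smul_mul_assoc]; exact Submodule.smul_mem _ _ hx
  have hAspan : Subalgebra.toSubmodule A = Submodule.span F (Set.range m) := by
    apply le_antisymm
    · intro x hx
      rw [Subalgebra.mem_toSubmodule] at hx
      induction hx using Algebra.adjoin_induction with
      | mem y hy =>
        obtain ⟨i, rfl⟩ := hy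
        have h1 : m {i} = ι q (u i) := by
          rw [hm_def]; exact Finset.noncommProd_singleton _ _
        have h2 : m {i} ∈ Submodule.span F (Set.range m) := Submodule.subset_span ⟨{i}, rfl⟩
        rw [h1] at h2
        exact h2
      | algebraMap r =>
        rw [Algebra.algebraMap_eq_smul_one, ← hm_empty]
        exact Submodule.smul_mem _ _ (Submodule.subset_span ⟨∅, rfl⟩)
      | add x y _ _ hx hy => exact Submodule.add_mem _ hx hy
      | mul x y _ _ hx hy => exact hmul_closed x hx y hy
    · rw [Submodule.span_le]
      rintro _ ⟨S, rfl⟩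
      exact hm_memA S
  -- build a basis of the subalgebra
  set m' : Finset (Fin s) → A := fun S => ⟨m S, hm_memA S⟩ with hm'_def
  have hli' : LinearIndependent F m' := by
    apply LinearIndependent.of_comp (Subalgebra.toSubmodule A).subtype
    exact hmli
  have hsp' : ⊤ ≤ Submodule.span F (Set.range m') := by
    have hinj : Function.Injective (Subalgebra.toSubmodule A).subtype :=
      Subtype.val_injective
    have hrange : LinearMap.range (Subalgebra.toSubmodule A).subtype =
        Subalgebra.toSubmodule A := Submodule.range_subtype _
    have hmap : Submodule.map (Subalgebra.toSubmodule A).subtype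
        (Submodule.span F (Set.range m')) =
        Submodule.map (Subalgebra.toSubmodule A).subtype ⊤ := by
      rw [Submodule.map_span, Submodule.map_top, hrange, ← Set.range_comp]
      exact hAspan.symm
    exact (Submodule.map_injective_of_injective hinj hmap).ge
  have hbasis : Module.Basis (Finset (Fin s)) F A := Module.Basis.mk hli' hsp'
  rw [Module.finrank_eq_card_basis hbasis, Fintype.card_finset, Fintype.card_fin]

theorem wall_stmt19 {F V : Type*} [Field F] [CharP F 2] [AddCommGroup V] [Module F V]
    [FiniteDimensional F V] (q : QuadraticForm F V)
    (hq : LinearMap.BilinForm.Nondegenerate (QuadraticMap.polarBilin q))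
    (τ : V →ₗ[F] V) (hτ : ∀ x, q (τ x) = q x)
    (hinv : τ ∘ₗ τ = LinearMap.id)
    (hRK : LinearMap.range (τ - LinearMap.id) = LinearMap.ker (τ - LinearMap.id))
    (s : ℕ) (hs : 2 * s = Module.finrank F V)
    (u xs : Fin s → V) (hu : ∀ i, τ (xs i) - xs i = u i)
    (hind : LinearIndependent F u)
    (hspan : Submodule.span F (Set.range u) = LinearMap.range (τ - LinearMap.id))
    (horth : ∀ i j, i ≠ j → QuadraticMap.polarBilin q (u i) (xs j) = 0) :
    (∀ i j, CliffordAlgebra.ι q (u i) * CliffordAlgebra.ι q (u j) =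
        CliffordAlgebra.ι q (u j) * CliffordAlgebra.ι q (u i)) ∧
    (∀ i, CliffordAlgebra.ι q (u i) * CliffordAlgebra.ι q (u i) =
        algebraMap F (CliffordAlgebra q) (q (u i))) ∧
    (∀ a ∈ Algebra.adjoin F (Set.range fun i => CliffordAlgebra.ι q (u i)),
      ∀ b ∈ Algebra.adjoin F (Set.range fun i => CliffordAlgebra.ι q (u i)),
        a * b = b * a) ∧
    Module.finrank F
      (Algebra.adjoin F (Set.range fun i => CliffordAlgebra.ι q (u i))) = 2 ^ s := by
  classical
  have hnegC : ∀ x : CliffordAlgebra q, -x = x := fun x => by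
    rw [← neg_one_smul F x, show (-1 : F) = 1 from CharTwo.neg_eq 1, one_smul]
  have hτu : ∀ i, τ (u i) = u i := by
    intro i
    have hmem : u i ∈ LinearMap.range (τ - LinearMap.id) :=
      ⟨xs i, by simp [LinearMap.sub_apply, hu i]⟩
    rw [hRK, LinearMap.mem_ker, LinearMap.sub_apply, LinearMap.id_apply, sub_eq_zero] at hmem
    exact hmem
  have hpolτ : ∀ x y, QuadraticMap.polar q (τ x) (τ y) = QuadraticMap.polar q x y := by
    intro x y
    rw [QuadraticMap.polar, QuadraticMap.polar, ← map_add, hτ, hτ, hτ]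
  have hpol : ∀ i j, i ≠ j → QuadraticMap.polar q (u i) (u j) = 0 := by
    intro i j _
    have huj : u j = τ (xs j) - xs j := (hu j).symm
    rw [huj, QuadraticMap.polar_sub_right, ← hpolτ (u i) (xs j), hτu i, sub_self]
  have hcomm : ∀ i j, CliffordAlgebra.ι q (u i) * CliffordAlgebra.ι q (u j) =
      CliffordAlgebra.ι q (u j) * CliffordAlgebra.ι q (u i) := by
    intro i j
    rcases eq_or_ne i j with rfl | hij
    · rfl
    · have h := CliffordAlgebra.ι_mul_ι_add_swap (Q := q) (u i) (u j)
      rw [hpol i j hij, map_zero, add_eq_zero_iff_eq_neg] at h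
      rw [h, hnegC]
  refine ⟨hcomm, fun i => CliffordAlgebra.ι_sq_scalar q (u i), ?_, ?_⟩
  · exact wall_aux_adjoin_comm (by rintro _ ⟨i, rfl⟩ _ ⟨j, rfl⟩; exact hcomm i j)
  · exact wall_aux_dim q u hind hpol
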